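/- Spinor representation of polarized degenerate 2-forms (key step in the proof of Theorem 2): every nonzero antisymmetric complex 4×4 matrix F satisfying ★F = −i F and det F = 0 can be written as F = F(ξ) for some nonzero ξ ∈ ℂ²; moreover ξ is unique up to sign, i.e. for nonzero ξ, ξ′ ∈ ℂ², F(ξ) = F(ξ′) if and only if ξ′ = ξ or ξ′ = −ξ. -/

import Mathlib

noncomputable section

open scoped Matrix

/-- Totally antisymmetric symbol, ε_{0123} = 1. -/
def eps (a b c d : Fin 4) : ℝ :=
  ∑ σ : Equiv.Perm (Fin 4),
    if σ 0 = a ∧ σ 1 = b ∧ σ 2 = c ∧ σ 3 = d then ((Equiv.Perm.sign σ : ℤ) : ℝ) else 0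

/-- η := diag(1,−1,−1,−1). -/
def ηM : Matrix (Fin 4) (Fin 4) ℝ :=
  !![1, 0, 0, 0; 0, -1, 0, 0; 0, 0, -1, 0; 0, 0, 0, -1]

/-- Pauli matrices s₀, s₁, s₂, s₃. -/
def sP : Fin 4 → Matrix (Fin 2) (Fin 2) ℂ :=
  ![!![1, 0; 0, 1], !![0, 1; 1, 0], !![0, Complex.I; -Complex.I, 0], !![1, 0; 0, -1]]

/-- The matrix E. -/
def EM : Matrix (Fin 2) (Fin 2) ℂ := !![0, 1; -1, 0]

/-- Second-order Pauli matrices σ_{jk} := (1/2)(s_j E s_kᵀ − s_k E s_jᵀ). -/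
def sig2 (j k : Fin 4) : Matrix (Fin 2) (Fin 2) ℂ :=
  (1/2 : ℂ) • (sP j * EM * (sP k)ᵀ - sP k * EM * (sP j)ᵀ)

/-- The spinor-to-2-form map F(ξ)_{jk} := σ_{jk ab} ξ^a ξ^b. -/
def Fspin (ξ : Fin 2 → ℂ) : Matrix (Fin 4) (Fin 4) ℂ :=
  Matrix.of fun j k => ∑ a : Fin 2, ∑ b : Fin 2, sig2 j k a b * ξ a * ξ b

/-- Minkowski Hodge star of an antisymmetric complex 4×4 matrix:
(★F)_{γδ} := (1/2) η^{αμ} η^{βν} F_{μν} ε_{αβγδ}. -/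
def hodge2 (F : Matrix (Fin 4) (Fin 4) ℂ) : Matrix (Fin 4) (Fin 4) ℂ :=
  Matrix.of fun γ δ => (1/2 : ℂ) *
    ∑ α : Fin 4, ∑ β : Fin 4, ∑ μ : Fin 4, ∑ ν : Fin 4,
      (ηM α μ : ℂ) * (ηM β ν : ℂ) * F μ ν * (eps α β γ δ : ℂ)

/-- l := (1,0,0,1). -/
def lV : Fin 4 → ℂ := ![1, 0, 0, 1]

/-- m := (0,1,i,0). -/
def mV : Fin 4 → ℂ := ![0, 1, Complex.I, 0]


/-! ### Auxiliary lemmas -/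

def epsZ (a b c d : Fin 4) : ℤ :=
  ∑ σ : Equiv.Perm (Fin 4),
    if σ 0 = a ∧ σ 1 = b ∧ σ 2 = c ∧ σ 3 = d then (Equiv.Perm.sign σ : ℤ) else 0

lemma eps_eq (a b c d : Fin 4) : eps a b c d = ((epsZ a b c d : ℤ) : ℝ) := by
  simp [eps, epsZ, apply_ite (fun z : ℤ => (z : ℝ))]

lemma epsv_0001 : eps 0 0 0 1 = 0 := by
  rw [eps_eq, show epsZ 0 0 0 1 = 0 from by decide]; norm_num
lemma epsv_0101 : eps 0 1 0 1 = 0 := by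
  rw [eps_eq, show epsZ 0 1 0 1 = 0 from by decide]; norm_num
lemma epsv_0201 : eps 0 2 0 1 = 0 := by
  rw [eps_eq, show epsZ 0 2 0 1 = 0 from by decide]; norm_num
lemma epsv_0301 : eps 0 3 0 1 = 0 := by
  rw [eps_eq, show epsZ 0 3 0 1 = 0 from by decide]; norm_num
lemma epsv_1001 : eps 1 0 0 1 = 0 := by
  rw [eps_eq, show epsZ 1 0 0 1 = 0 from by decide]; norm_num
lemma epsv_1101 : eps 1 1 0 1 = 0 := by
  rw [eps_eq, show epsZ 1 1 0 1 = 0 from by decide]; norm_num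
lemma epsv_1201 : eps 1 2 0 1 = 0 := by
  rw [eps_eq, show epsZ 1 2 0 1 = 0 from by decide]; norm_num
lemma epsv_1301 : eps 1 3 0 1 = 0 := by
  rw [eps_eq, show epsZ 1 3 0 1 = 0 from by decide]; norm_num
lemma epsv_2001 : eps 2 0 0 1 = 0 := by
  rw [eps_eq, show epsZ 2 0 0 1 = 0 from by decide]; norm_num
lemma epsv_2101 : eps 2 1 0 1 = 0 := by
  rw [eps_eq, show epsZ 2 1 0 1 = 0 from by decide]; norm_num
lemma epsv_2201 : eps 2 2 0 1 = 0 := by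
  rw [eps_eq, show epsZ 2 2 0 1 = 0 from by decide]; norm_num
lemma epsv_2301 : eps 2 3 0 1 = 1 := by
  rw [eps_eq, show epsZ 2 3 0 1 = 1 from by decide]; norm_num
lemma epsv_3001 : eps 3 0 0 1 = 0 := by
  rw [eps_eq, show epsZ 3 0 0 1 = 0 from by decide]; norm_num
lemma epsv_3101 : eps 3 1 0 1 = 0 := by
  rw [eps_eq, show epsZ 3 1 0 1 = 0 from by decide]; norm_num
lemma epsv_3201 : eps 3 2 0 1 = -1 := by
  rw [eps_eq, show epsZ 3 2 0 1 = -1 from by decide]; norm_num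
lemma epsv_3301 : eps 3 3 0 1 = 0 := by
  rw [eps_eq, show epsZ 3 3 0 1 = 0 from by decide]; norm_num
lemma epsv_0002 : eps 0 0 0 2 = 0 := by
  rw [eps_eq, show epsZ 0 0 0 2 = 0 from by decide]; norm_num
lemma epsv_0102 : eps 0 1 0 2 = 0 := by
  rw [eps_eq, show epsZ 0 1 0 2 = 0 from by decide]; norm_num
lemma epsv_0202 : eps 0 2 0 2 = 0 := by
  rw [eps_eq, show epsZ 0 2 0 2 = 0 from by decide]; norm_num
lemma epsv_0302 : eps 0 3 0 2 = 0 := by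
  rw [eps_eq, show epsZ 0 3 0 2 = 0 from by decide]; norm_num
lemma epsv_1002 : eps 1 0 0 2 = 0 := by
  rw [eps_eq, show epsZ 1 0 0 2 = 0 from by decide]; norm_num
lemma epsv_1102 : eps 1 1 0 2 = 0 := by
  rw [eps_eq, show epsZ 1 1 0 2 = 0 from by decide]; norm_num
lemma epsv_1202 : eps 1 2 0 2 = 0 := by
  rw [eps_eq, show epsZ 1 2 0 2 = 0 from by decide]; norm_num
lemma epsv_1302 : eps 1 3 0 2 = -1 := by
  rw [eps_eq, show epsZ 1 3 0 2 = -1 from by decide]; norm_num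
lemma epsv_2002 : eps 2 0 0 2 = 0 := by
  rw [eps_eq, show epsZ 2 0 0 2 = 0 from by decide]; norm_num
lemma epsv_2102 : eps 2 1 0 2 = 0 := by
  rw [eps_eq, show epsZ 2 1 0 2 = 0 from by decide]; norm_num
lemma epsv_2202 : eps 2 2 0 2 = 0 := by
  rw [eps_eq, show epsZ 2 2 0 2 = 0 from by decide]; norm_num
lemma epsv_2302 : eps 2 3 0 2 = 0 := by
  rw [eps_eq, show epsZ 2 3 0 2 = 0 from by decide]; norm_num
lemma epsv_3002 : eps 3 0 0 2 = 0 := by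
  rw [eps_eq, show epsZ 3 0 0 2 = 0 from by decide]; norm_num
lemma epsv_3102 : eps 3 1 0 2 = 1 := by
  rw [eps_eq, show epsZ 3 1 0 2 = 1 from by decide]; norm_num
lemma epsv_3202 : eps 3 2 0 2 = 0 := by
  rw [eps_eq, show epsZ 3 2 0 2 = 0 from by decide]; norm_num
lemma epsv_3302 : eps 3 3 0 2 = 0 := by
  rw [eps_eq, show epsZ 3 3 0 2 = 0 from by decide]; norm_num
lemma epsv_0003 : eps 0 0 0 3 = 0 := by
  rw [eps_eq, show epsZ 0 0 0 3 = 0 from by decide]; norm_num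
lemma epsv_0103 : eps 0 1 0 3 = 0 := by
  rw [eps_eq, show epsZ 0 1 0 3 = 0 from by decide]; norm_num
lemma epsv_0203 : eps 0 2 0 3 = 0 := by
  rw [eps_eq, show epsZ 0 2 0 3 = 0 from by decide]; norm_num
lemma epsv_0303 : eps 0 3 0 3 = 0 := by
  rw [eps_eq, show epsZ 0 3 0 3 = 0 from by decide]; norm_num
lemma epsv_1003 : eps 1 0 0 3 = 0 := by
  rw [eps_eq, show epsZ 1 0 0 3 = 0 from by decide]; norm_num
lemma epsv_1103 : eps 1 1 0 3 = 0 := by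
  rw [eps_eq, show epsZ 1 1 0 3 = 0 from by decide]; norm_num
lemma epsv_1203 : eps 1 2 0 3 = 1 := by
  rw [eps_eq, show epsZ 1 2 0 3 = 1 from by decide]; norm_num
lemma epsv_1303 : eps 1 3 0 3 = 0 := by
  rw [eps_eq, show epsZ 1 3 0 3 = 0 from by decide]; norm_num
lemma epsv_2003 : eps 2 0 0 3 = 0 := by
  rw [eps_eq, show epsZ 2 0 0 3 = 0 from by decide]; norm_num
lemma epsv_2103 : eps 2 1 0 3 = -1 := by
  rw [eps_eq, show epsZ 2 1 0 3 = -1 from by decide]; norm_num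
lemma epsv_2203 : eps 2 2 0 3 = 0 := by
  rw [eps_eq, show epsZ 2 2 0 3 = 0 from by decide]; norm_num
lemma epsv_2303 : eps 2 3 0 3 = 0 := by
  rw [eps_eq, show epsZ 2 3 0 3 = 0 from by decide]; norm_num
lemma epsv_3003 : eps 3 0 0 3 = 0 := by
  rw [eps_eq, show epsZ 3 0 0 3 = 0 from by decide]; norm_num
lemma epsv_3103 : eps 3 1 0 3 = 0 := by
  rw [eps_eq, show epsZ 3 1 0 3 = 0 from by decide]; norm_num
lemma epsv_3203 : eps 3 2 0 3 = 0 := by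
  rw [eps_eq, show epsZ 3 2 0 3 = 0 from by decide]; norm_num
lemma epsv_3303 : eps 3 3 0 3 = 0 := by
  rw [eps_eq, show epsZ 3 3 0 3 = 0 from by decide]; norm_num
lemma etav_00 : ηM 0 0 = 1 := by norm_num [ηM, Matrix.vecHead, Matrix.vecTail]
lemma etav_01 : ηM 0 1 = 0 := by norm_num [ηM, Matrix.vecHead, Matrix.vecTail]
lemma etav_02 : ηM 0 2 = 0 := by simp [ηM]
lemma etav_03 : ηM 0 3 = 0 := by simp [ηM]
lemma etav_10 : ηM 1 0 = 0 := by norm_num [ηM, Matrix.vecHead, Matrix.vecTail]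
lemma etav_11 : ηM 1 1 = -1 := by norm_num [ηM, Matrix.vecHead, Matrix.vecTail]
lemma etav_12 : ηM 1 2 = 0 := by simp [ηM]
lemma etav_13 : ηM 1 3 = 0 := by simp [ηM]
lemma etav_20 : ηM 2 0 = 0 := by simp [ηM]
lemma etav_21 : ηM 2 1 = 0 := by simp [ηM]
lemma etav_22 : ηM 2 2 = -1 := by simp [ηM]
lemma etav_23 : ηM 2 3 = 0 := by simp [ηM]
lemma etav_30 : ηM 3 0 = 0 := by simp [ηM]
lemma etav_31 : ηM 3 1 = 0 := by simp [ηM]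
lemma etav_32 : ηM 3 2 = 0 := by simp [ηM]
lemma etav_33 : ηM 3 3 = -1 := by simp [ηM]


lemma hodge2_01 (F : Matrix (Fin 4) (Fin 4) ℂ) : hodge2 F 0 1 = (1/2)*(F 2 3 - F 3 2) := by
  simp only [hodge2, Matrix.of_apply, Fin.sum_univ_four, epsv_0001, epsv_0101, epsv_0201, epsv_0301, epsv_1001, epsv_1101, epsv_1201, epsv_1301, epsv_2001, epsv_2101, epsv_2201, epsv_2301, epsv_3001, epsv_3101, epsv_3201, epsv_3301, etav_00, etav_01, etav_02, etav_03, etav_10, etav_11, etav_12, etav_13, etav_20, etav_21, etav_22, etav_23, etav_30, etav_31, etav_32, etav_33]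
  push_cast
  ring

lemma hodge2_02 (F : Matrix (Fin 4) (Fin 4) ℂ) : hodge2 F 0 2 = (1/2)*(F 3 1 - F 1 3) := by
  simp only [hodge2, Matrix.of_apply, Fin.sum_univ_four, epsv_0002, epsv_0102, epsv_0202, epsv_0302, epsv_1002, epsv_1102, epsv_1202, epsv_1302, epsv_2002, epsv_2102, epsv_2202, epsv_2302, epsv_3002, epsv_3102, epsv_3202, epsv_3302, etav_00, etav_01, etav_02, etav_03, etav_10, etav_11, etav_12, etav_13, etav_20, etav_21, etav_22, etav_23, etav_30, etav_31, etav_32, etav_33]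
  push_cast
  ring

lemma hodge2_03 (F : Matrix (Fin 4) (Fin 4) ℂ) : hodge2 F 0 3 = (1/2)*(F 1 2 - F 2 1) := by
  simp only [hodge2, Matrix.of_apply, Fin.sum_univ_four, epsv_0003, epsv_0103, epsv_0203, epsv_0303, epsv_1003, epsv_1103, epsv_1203, epsv_1303, epsv_2003, epsv_2103, epsv_2203, epsv_2303, epsv_3003, epsv_3103, epsv_3203, epsv_3303, etav_00, etav_01, etav_02, etav_03, etav_10, etav_11, etav_12, etav_13, etav_20, etav_21, etav_22, etav_23, etav_30, etav_31, etav_32, etav_33]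
  push_cast
  ring

lemma Fspin_e00 (ξ : Fin 2 → ℂ) : Fspin ξ 0 0 = 0 := by
  simp [Fspin, sig2, sP, EM, Matrix.mul_apply, Fin.sum_univ_two,
    Matrix.cons_val_zero, Matrix.cons_val_one, Matrix.head_cons,
    Matrix.cons_val_two, Matrix.cons_val_three, Matrix.vecHead, Matrix.vecTail]
  all_goals ring
lemma Fspin_e01 (ξ : Fin 2 → ℂ) : Fspin ξ 0 1 = ξ 0^2 - ξ 1^2 := by
  simp [Fspin, sig2, sP, EM, Matrix.mul_apply, Fin.sum_univ_two,
    Matrix.cons_val_zero, Matrix.cons_val_one, Matrix.head_cons,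
    Matrix.cons_val_two, Matrix.cons_val_three, Matrix.vecHead, Matrix.vecTail]
  all_goals ring
lemma Fspin_e02 (ξ : Fin 2 → ℂ) : Fspin ξ 0 2 = Complex.I*(ξ 0^2 + ξ 1^2) := by
  simp [Fspin, sig2, sP, EM, Matrix.mul_apply, Fin.sum_univ_two,
    Matrix.cons_val_zero, Matrix.cons_val_one, Matrix.head_cons,
    Matrix.cons_val_two, Matrix.cons_val_three, Matrix.vecHead, Matrix.vecTail]
  all_goals ring
lemma Fspin_e03 (ξ : Fin 2 → ℂ) : Fspin ξ 0 3 = -2*(ξ 0*ξ 1) := by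
  simp [Fspin, sig2, sP, EM, Matrix.mul_apply, Fin.sum_univ_two,
    Matrix.cons_val_zero, Matrix.cons_val_one, Matrix.head_cons,
    Matrix.cons_val_two, Matrix.cons_val_three, Matrix.vecHead, Matrix.vecTail]
  all_goals ring
lemma Fspin_e10 (ξ : Fin 2 → ℂ) : Fspin ξ 1 0 = -(ξ 0^2 - ξ 1^2) := by
  simp [Fspin, sig2, sP, EM, Matrix.mul_apply, Fin.sum_univ_two,
    Matrix.cons_val_zero, Matrix.cons_val_one, Matrix.head_cons,
    Matrix.cons_val_two, Matrix.cons_val_three, Matrix.vecHead, Matrix.vecTail]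
  all_goals ring
lemma Fspin_e11 (ξ : Fin 2 → ℂ) : Fspin ξ 1 1 = 0 := by
  simp [Fspin, sig2, sP, EM, Matrix.mul_apply, Fin.sum_univ_two,
    Matrix.cons_val_zero, Matrix.cons_val_one, Matrix.head_cons,
    Matrix.cons_val_two, Matrix.cons_val_three, Matrix.vecHead, Matrix.vecTail]
  all_goals ring
lemma Fspin_e12 (ξ : Fin 2 → ℂ) : Fspin ξ 1 2 = 2*Complex.I*(ξ 0*ξ 1) := by
  simp [Fspin, sig2, sP, EM, Matrix.mul_apply, Fin.sum_univ_two,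
    Matrix.cons_val_zero, Matrix.cons_val_one, Matrix.head_cons,
    Matrix.cons_val_two, Matrix.cons_val_three, Matrix.vecHead, Matrix.vecTail]
  all_goals ring
lemma Fspin_e13 (ξ : Fin 2 → ℂ) : Fspin ξ 1 3 = -(ξ 0^2 + ξ 1^2) := by
  simp [Fspin, sig2, sP, EM, Matrix.mul_apply, Fin.sum_univ_two,
    Matrix.cons_val_zero, Matrix.cons_val_one, Matrix.head_cons,
    Matrix.cons_val_two, Matrix.cons_val_three, Matrix.vecHead, Matrix.vecTail]
  all_goals ring
lemma Fspin_e20 (ξ : Fin 2 → ℂ) : Fspin ξ 2 0 = -(Complex.I*(ξ 0^2 + ξ 1^2)) := by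
  simp [Fspin, sig2, sP, EM, Matrix.mul_apply, Fin.sum_univ_two,
    Matrix.cons_val_zero, Matrix.cons_val_one, Matrix.head_cons,
    Matrix.cons_val_two, Matrix.cons_val_three, Matrix.vecHead, Matrix.vecTail]
  all_goals ring
lemma Fspin_e21 (ξ : Fin 2 → ℂ) : Fspin ξ 2 1 = -(2*Complex.I*(ξ 0*ξ 1)) := by
  simp [Fspin, sig2, sP, EM, Matrix.mul_apply, Fin.sum_univ_two,
    Matrix.cons_val_zero, Matrix.cons_val_one, Matrix.head_cons,
    Matrix.cons_val_two, Matrix.cons_val_three, Matrix.vecHead, Matrix.vecTail]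
  all_goals ring
lemma Fspin_e22 (ξ : Fin 2 → ℂ) : Fspin ξ 2 2 = 0 := by
  simp [Fspin, sig2, sP, EM, Matrix.mul_apply, Fin.sum_univ_two,
    Matrix.cons_val_zero, Matrix.cons_val_one, Matrix.head_cons,
    Matrix.cons_val_two, Matrix.cons_val_three, Matrix.vecHead, Matrix.vecTail]
  all_goals ring
lemma Fspin_e23 (ξ : Fin 2 → ℂ) : Fspin ξ 2 3 = -(Complex.I*(ξ 0^2 - ξ 1^2)) := by
  simp [Fspin, sig2, sP, EM, Matrix.mul_apply, Fin.sum_univ_two,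
    Matrix.cons_val_zero, Matrix.cons_val_one, Matrix.head_cons,
    Matrix.cons_val_two, Matrix.cons_val_three, Matrix.vecHead, Matrix.vecTail]
  all_goals ring
lemma Fspin_e30 (ξ : Fin 2 → ℂ) : Fspin ξ 3 0 = 2*(ξ 0*ξ 1) := by
  simp [Fspin, sig2, sP, EM, Matrix.mul_apply, Fin.sum_univ_two,
    Matrix.cons_val_zero, Matrix.cons_val_one, Matrix.head_cons,
    Matrix.cons_val_two, Matrix.cons_val_three, Matrix.vecHead, Matrix.vecTail]
  all_goals ring
lemma Fspin_e31 (ξ : Fin 2 → ℂ) : Fspin ξ 3 1 = ξ 0^2 + ξ 1^2 := by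
  simp [Fspin, sig2, sP, EM, Matrix.mul_apply, Fin.sum_univ_two,
    Matrix.cons_val_zero, Matrix.cons_val_one, Matrix.head_cons,
    Matrix.cons_val_two, Matrix.cons_val_three, Matrix.vecHead, Matrix.vecTail]
  all_goals ring
lemma Fspin_e32 (ξ : Fin 2 → ℂ) : Fspin ξ 3 2 = Complex.I*(ξ 0^2 - ξ 1^2) := by
  simp [Fspin, sig2, sP, EM, Matrix.mul_apply, Fin.sum_univ_two,
    Matrix.cons_val_zero, Matrix.cons_val_one, Matrix.head_cons,
    Matrix.cons_val_two, Matrix.cons_val_three, Matrix.vecHead, Matrix.vecTail]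
  all_goals ring
lemma Fspin_e33 (ξ : Fin 2 → ℂ) : Fspin ξ 3 3 = 0 := by
  simp [Fspin, sig2, sP, EM, Matrix.mul_apply, Fin.sum_univ_two,
    Matrix.cons_val_zero, Matrix.cons_val_one, Matrix.head_cons,
    Matrix.cons_val_two, Matrix.cons_val_three, Matrix.vecHead, Matrix.vecTail]
  all_goals ring


lemma Fspin_apply (ξ : Fin 2 → ℂ) :
    Fspin ξ = !![0, ξ 0^2 - ξ 1^2, Complex.I*(ξ 0^2 + ξ 1^2), -2*(ξ 0*ξ 1);
      -(ξ 0^2 - ξ 1^2), 0, 2*Complex.I*(ξ 0*ξ 1), -(ξ 0^2 + ξ 1^2);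
      -(Complex.I*(ξ 0^2 + ξ 1^2)), -(2*Complex.I*(ξ 0*ξ 1)), 0, -(Complex.I*(ξ 0^2 - ξ 1^2));
      2*(ξ 0*ξ 1), ξ 0^2 + ξ 1^2, Complex.I*(ξ 0^2 - ξ 1^2), 0] := by
  ext j k
  fin_cases j <;> fin_cases k <;>
    simp [Fspin_e00, Fspin_e01, Fspin_e02, Fspin_e03, Fspin_e10, Fspin_e11, Fspin_e12,
      Fspin_e13, Fspin_e20, Fspin_e21, Fspin_e22, Fspin_e23, Fspin_e30, Fspin_e31, Fspin_e32,
      Fspin_e33]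

lemma Fspin_neg (ξ : Fin 2 → ℂ) : Fspin (-ξ) = Fspin ξ := by
  rw [Fspin_apply, Fspin_apply]
  simp [Pi.neg_apply, neg_sq, neg_mul_neg]

lemma mat4_ext {a00 a01 a02 a03 a10 a11 a12 a13 a20 a21 a22 a23 a30 a31 a32 a33
    b00 b01 b02 b03 b10 b11 b12 b13 b20 b21 b22 b23 b30 b31 b32 b33 : ℂ}
    (h00 : a00 = b00) (h01 : a01 = b01) (h02 : a02 = b02) (h03 : a03 = b03)
    (h10 : a10 = b10) (h11 : a11 = b11) (h12 : a12 = b12) (h13 : a13 = b13)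
    (h20 : a20 = b20) (h21 : a21 = b21) (h22 : a22 = b22) (h23 : a23 = b23)
    (h30 : a30 = b30) (h31 : a31 = b31) (h32 : a32 = b32) (h33 : a33 = b33) :
    !![a00,a01,a02,a03; a10,a11,a12,a13; a20,a21,a22,a23; a30,a31,a32,a33] =
    !![b00,b01,b02,b03; b10,b11,b12,b13; b20,b21,b22,b23; b30,b31,b32,b33] := by
  rw [h00, h01, h02, h03, h10, h11, h12, h13, h20, h21, h22, h23, h30, h31, h32, h33]

/-- The polarized antisymmetric matrix built from (a,b,c). -/
def MF (a b c : ℂ) : Matrix (Fin 4) (Fin 4) ℂ :=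
  !![0, a, b, c;
     -a, 0, -Complex.I*c, Complex.I*b;
     -b, Complex.I*c, 0, -Complex.I*a;
     -c, -Complex.I*b, Complex.I*a, 0]

lemma castSucc_two4 : Fin.castSucc (2 : Fin 3) = (2 : Fin 4) := rfl
lemma castSucc_one4 : Fin.castSucc (1 : Fin 3) = (1 : Fin 4) := rfl
lemma castSucc_zero4 : Fin.castSucc (0 : Fin 3) = (0 : Fin 4) := rfl

lemma det_MF (a b c : ℂ) : (MF a b c).det = -(a^2+b^2+c^2)^2 := by
  rw [MF, Matrix.det_succ_row_zero]
  simp (config := { decide := true }) [Fin.sum_univ_succ, Matrix.det_fin_three, Matrix.submatrix_apply, Fin.succAbove,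
    castSucc_two4, castSucc_one4, castSucc_zero4,
    Matrix.cons_val_zero, Matrix.cons_val_one, Matrix.head_cons,
    Matrix.cons_val_two, Matrix.cons_val_three, Matrix.vecHead, Matrix.vecTail]
  linear_combination (a^2+b^2+c^2)^2 * Complex.I_sq

lemma build_MF (a b c : ℂ) (ξ : Fin 2 → ℂ) (h1 : ξ 0^2 - ξ 1^2 = a)
    (h2 : Complex.I*(ξ 0^2 + ξ 1^2) = b) (h3 : -2*(ξ 0*ξ 1) = c) :
    MF a b c = Fspin ξ := by
  rw [MF, Fspin_apply]
  apply mat4_ext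
  · rfl
  · linear_combination -h1
  · linear_combination -h2
  · linear_combination -h3
  · linear_combination h1
  · rfl
  · linear_combination Complex.I*h3
  · linear_combination -Complex.I*h2 + (ξ 0^2 + ξ 1^2)*Complex.I_sq
  · linear_combination h2
  · linear_combination -Complex.I*h3
  · rfl
  · linear_combination Complex.I*h1
  · linear_combination h3
  · linear_combination Complex.I*h2 - (ξ 0^2 + ξ 1^2)*Complex.I_sq
  · linear_combination -Complex.I*h1
  · rfl

lemma vec2_eq {u v : Fin 2 → ℂ} (h0 : u 0 = v 0) (h1 : u 1 = v 1) : u = v := by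
  funext i; fin_cases i <;> assumption


/-- Spinor representation of polarized degenerate 2-forms: every nonzero antisymmetric
complex 4×4 matrix F with ★F = −iF and det F = 0 is F(ξ) for some nonzero ξ ∈ ℂ²,
and ξ is unique up to sign. -/
theorem polarized_degenerate_two_form_is_spinor_square :
    (∀ F : Matrix (Fin 4) (Fin 4) ℂ, F ≠ 0 → Fᵀ = -F →
      hodge2 F = (-Complex.I) • F → F.det = 0 →
      ∃ ξ : Fin 2 → ℂ, ξ ≠ 0 ∧ F = Fspin ξ) ∧
    (∀ ξ ξ' : Fin 2 → ℂ, ξ ≠ 0 → ξ' ≠ 0 →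
      (Fspin ξ = Fspin ξ' ↔ ξ' = ξ ∨ ξ' = -ξ)) := by
  constructor
  · -- existence
    intro F hF0 hT hstar hdet
    have hA : ∀ i j : Fin 4, F j i = -F i j := by
      intro i j
      have h := congrFun (congrFun hT i) j
      simpa [Matrix.transpose_apply, Matrix.neg_apply] using h
    have e00 : F 0 0 = 0 := by linear_combination (hA 0 0)/2
    have e11 : F 1 1 = 0 := by linear_combination (hA 1 1)/2
    have e22 : F 2 2 = 0 := by linear_combination (hA 2 2)/2
    have e33 : F 3 3 = 0 := by linear_combination (hA 3 3)/2
    have h23 : F 2 3 = -Complex.I * F 0 1 := by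
      have h := congrFun (congrFun hstar 0) 1
      rw [hodge2_01] at h
      simp only [Matrix.smul_apply, smul_eq_mul] at h
      rw [hA 2 3] at h
      linear_combination h
    have h13 : F 1 3 = Complex.I * F 0 2 := by
      have h := congrFun (congrFun hstar 0) 2
      rw [hodge2_02] at h
      simp only [Matrix.smul_apply, smul_eq_mul] at h
      rw [hA 1 3] at h
      linear_combination -h
    have h12 : F 1 2 = -Complex.I * F 0 3 := by
      have h := congrFun (congrFun hstar 0) 3
      rw [hodge2_03] at h
      simp only [Matrix.smul_apply, smul_eq_mul] at h
      rw [hA 1 2] at h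
      linear_combination h
    have hFM : F = MF (F 0 1) (F 0 2) (F 0 3) := by
      ext i j
      fin_cases i <;> fin_cases j <;>
        simp [MF, e00, e11, e22, e33, h23, h13, h12,
          hA 0 1, hA 0 2, hA 0 3, hA 1 2, hA 1 3, hA 2 3]
    have hs : F 0 1^2 + F 0 2^2 + F 0 3^2 = 0 := by
      apply sq_eq_zero_iff.mp
      rw [hFM, det_MF] at hdet
      linear_combination -hdet
    have habc : ¬ (F 0 1 = 0 ∧ F 0 2 = 0 ∧ F 0 3 = 0) := by
      rintro ⟨h1, h2, h3⟩
      apply hF0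
      rw [hFM, h1, h2, h3]
      ext i j
      fin_cases i <;> fin_cases j <;> simp [MF, Matrix.vecHead, Matrix.vecTail]
    by_cases hab : F 0 1 - Complex.I * F 0 2 = 0
    · -- degenerate case : ξ 0 = 0
      have hc0 : F 0 3 = 0 := by
        apply sq_eq_zero_iff.mp
        linear_combination hs - (F 0 1 + Complex.I*F 0 2) * hab - (F 0 2)^2 * Complex.I_sq
      have hb0 : F 0 1 + Complex.I * F 0 2 ≠ 0 := by
        intro h
        apply habc
        refine ⟨?_, ?_, hc0⟩
        · linear_combination hab/2 + h/2
        · linear_combination (Complex.I/2)*hab - (Complex.I/2)*h + F 0 2 * Complex.I_sq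
      obtain ⟨y, hy⟩ := IsAlgClosed.exists_pow_nat_eq
        (-(F 0 1 + Complex.I*F 0 2)/2) (n := 2) (by norm_num)
      have hy0 : y ≠ 0 := by
        intro h
        apply hb0
        rw [h] at hy
        linear_combination 2*hy
      refine ⟨![0, y], ?_, ?_⟩
      · intro h
        exact hy0 (by simpa using congrFun h 1)
      · refine hFM.trans (build_MF _ _ _ _ ?_ ?_ ?_)
        · simp only [Matrix.cons_val_zero, Matrix.cons_val_one, Matrix.head_cons]
          linear_combination -hy - hab/2
        · simp only [Matrix.cons_val_zero, Matrix.cons_val_one, Matrix.head_cons]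
          linear_combination Complex.I*hy - (Complex.I/2)*hab - F 0 2*Complex.I_sq
        · simp only [Matrix.cons_val_zero, Matrix.cons_val_one, Matrix.head_cons]
          linear_combination -hc0
    · -- generic case : ξ 0 ≠ 0
      obtain ⟨x, hx⟩ := IsAlgClosed.exists_pow_nat_eq
        ((F 0 1 - Complex.I*F 0 2)/2) (n := 2) (by norm_num)
      have hx0 : x ≠ 0 := by
        intro h
        apply hab
        linear_combination -2*hx + 2*x*h
      have hy2 : (-F 0 3/(2*x))^2 = -(F 0 1 + Complex.I*F 0 2)/2 := by
        rw [div_pow]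
        rw [div_eq_div_iff (pow_ne_zero 2 (mul_ne_zero two_ne_zero hx0)) two_ne_zero]
        linear_combination 2*hs + 4*(F 0 1 + Complex.I*F 0 2)*hx - 2*(F 0 2)^2*Complex.I_sq
      refine ⟨![x, -F 0 3/(2*x)], ?_, ?_⟩
      · intro h
        exact hx0 (by simpa using congrFun h 0)
      · refine hFM.trans (build_MF _ _ _ _ ?_ ?_ ?_)
        · simp only [Matrix.cons_val_zero, Matrix.cons_val_one, Matrix.head_cons]
          linear_combination hx - hy2
        · simp only [Matrix.cons_val_zero, Matrix.cons_val_one, Matrix.head_cons]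
          linear_combination Complex.I*hx + Complex.I*hy2 - F 0 2*Complex.I_sq
        · simp only [Matrix.cons_val_zero, Matrix.cons_val_one, Matrix.head_cons]
          field_simp
  · -- uniqueness up to sign
    intro ξ ξ' hξ hξ'
    constructor
    · intro h
      have e1 := congrFun (congrFun h 0) 1
      have e2 := congrFun (congrFun h 0) 2
      have e3 := congrFun (congrFun h 0) 3
      rw [Fspin_e01, Fspin_e01] at e1
      rw [Fspin_e02, Fspin_e02] at e2
      rw [Fspin_e03, Fspin_e03] at e3
      have hsum : ξ 0^2 + ξ 1^2 = ξ' 0^2 + ξ' 1^2 :=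
        mul_left_cancel₀ Complex.I_ne_zero e2
      have hx2 : ξ 0^2 = ξ' 0^2 := by linear_combination e1/2 + hsum/2
      have hy2 : ξ 1^2 = ξ' 1^2 := by linear_combination hsum/2 - e1/2
      have hxy : ξ 0 * ξ 1 = ξ' 0 * ξ' 1 := by linear_combination -e3/2
      have hx' : ξ' 0 = ξ 0 ∨ ξ' 0 = -ξ 0 := by
        rcases mul_eq_zero.mp (show (ξ' 0 - ξ 0)*(ξ' 0 + ξ 0) = 0 by linear_combination -hx2)
          with h' | h'
        · exact Or.inl (by linear_combination h')
        · exact Or.inr (by linear_combination h')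
      have hy' : ξ' 1 = ξ 1 ∨ ξ' 1 = -ξ 1 := by
        rcases mul_eq_zero.mp (show (ξ' 1 - ξ 1)*(ξ' 1 + ξ 1) = 0 by linear_combination -hy2)
          with h' | h'
        · exact Or.inl (by linear_combination h')
        · exact Or.inr (by linear_combination h')
      rcases hx' with h1 | h1 <;> rcases hy' with h2 | h2
      · exact Or.inl (vec2_eq h1 h2)
      · -- ξ'0 = ξ0, ξ'1 = -ξ1
        rw [h1, h2] at hxy
        rcases mul_eq_zero.mp (show ξ 0 * ξ 1 = 0 by linear_combination hxy/2) with h0 | h0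
        · exact Or.inr (vec2_eq (by simp [h1, h0]) (by simp [h2]))
        · exact Or.inl (vec2_eq h1 (by simp [h2, h0]))
      · -- ξ'0 = -ξ0, ξ'1 = ξ1
        rw [h1, h2] at hxy
        rcases mul_eq_zero.mp (show ξ 0 * ξ 1 = 0 by linear_combination hxy/2) with h0 | h0
        · exact Or.inl (vec2_eq (by simp [h1, h0]) h2)
        · exact Or.inr (vec2_eq (by simp [h1]) (by simp [h2, h0]))
      · exact Or.inr (vec2_eq (by simp [h1]) (by simp [h2]))
    · rintro (rfl | rfl)
      · rfl
      · rw [Fspin_neg]
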